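/- arXiv:2308.10084 — 2 statements merged into one kernel-verified Lean document; each statement's English description precedes it below -/
import Mathlib

section
/- For every complex s with Re(s) > 1, s ≠ 1, one has ∫_1^∞ (1 - A(t))·t^{-1-s} dt = 1/s - (ζ(s)/s)·(1 - 2^{-s} - 3^{-s} - 5^{-s} + 30^{-s}), where A(t) = ⌊t⌋ - ⌊t/2⌋ - ⌊t/3⌋ - ⌊t/5⌋ + ⌊t/30⌋. -/
open Finset Real ArithmeticFunction

noncomputable def M (x : ℝ) : ℝ := ∑ n ∈ Finset.Icc 1 ⌊x⌋₊, (ArithmeticFunction.moebius n : ℝ)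

noncomputable def N (x : ℝ) : ℝ := ∑ n ∈ Finset.Icc 1 ⌊x⌋₊, (ArithmeticFunction.moebius n : ℝ) * Real.log n

noncomputable def ψ (x : ℝ) : ℝ := ∑ n ∈ Finset.Icc 1 ⌊x⌋₊, Λ n

noncomputable def m (x : ℝ) : ℝ := ∑ n ∈ Finset.Icc 1 ⌊x⌋₊, (ArithmeticFunction.moebius n : ℝ) / n

noncomputable def m₁ (x : ℝ) : ℝ := m x - M x / x

noncomputable def A (t : ℝ) : ℝ :=
  (⌊t⌋ : ℝ) - (⌊t/2⌋ : ℝ) - (⌊t/3⌋ : ℝ) - (⌊t/5⌋ : ℝ) + (⌊t/30⌋ : ℝ)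

open MeasureTheory Set

lemma cpow_asm (s : ℂ) :
    AEStronglyMeasurable (fun t : ℝ => (t : ℂ) ^ (-1 - s)) (volume.restrict (Set.Ioi (1:ℝ))) := by
  refine ContinuousOn.aestronglyMeasurable (fun t ht => ?_) measurableSet_Ioi
  exact (Complex.continuousAt_ofReal_cpow_const _ _
    (Or.inr (lt_trans one_pos ht).ne')).continuousWithinAt

lemma cpow_int (s : ℂ) (hs : 1 < s.re) :
    IntegrableOn (fun t : ℝ => (t : ℂ) ^ (-1 - s)) (Set.Ioi (1:ℝ)) :=
  integrableOn_Ioi_cpow_of_lt (by simp; linarith) one_pos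

lemma ioi_ae (m : ℝ) (hm : 1 ≤ m) :
    (Ici m ∩ Ioi 1 : Set ℝ) =ᵐ[volume] (Ioi m : Set ℝ) := by
  rw [MeasureTheory.ae_eq_set]
  constructor
  · refine measure_mono_null (fun x hx => ?_) (measure_singleton m)
    obtain ⟨⟨h1, _⟩, h2⟩ := hx
    simp only [Set.mem_Ioi, not_lt] at h2
    exact le_antisymm h2 h1
  · have he : (Ioi m \ (Ici m ∩ Ioi 1) : Set ℝ) = ∅ := by
      ext x
      simp only [Set.mem_diff, Set.mem_Ioi, Set.mem_inter_iff, Set.mem_Ici,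
        Set.mem_empty_iff_false, iff_false, not_and, not_not]
      intro h1 h2
      exact h2 (le_of_lt h1) (lt_of_le_of_lt hm h1)
    simp [he]

lemma indicator_integral {E : Type*} [NormedAddCommGroup E] [NormedSpace ℝ E]
    (g : ℝ → E) (m : ℝ) (hm : 1 ≤ m) :
    ∫ t in Ioi (1:ℝ), (Ici m).indicator g t = ∫ t in Ioi m, g t := by
  rw [integral_indicator measurableSet_Ici, Measure.restrict_restrict measurableSet_Ici]
  exact setIntegral_congr_set (ioi_ae m hm)

lemma floor_tsum (s : ℂ) (k : ℕ) (hk : 0 < k) (t : ℝ) (ht : 1 < t) :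
    ∑' n : ℕ, (Ici ((k*(n+1) : ℕ) : ℝ)).indicator (fun x : ℝ => (x:ℂ)^(-1-s)) t
      = ((⌊t/(k:ℝ)⌋ : ℝ) : ℂ) * (t:ℂ)^(-1-s) := by
  have ht0 : 0 < t := lt_trans one_pos ht
  have hk0 : (0:ℝ) < k := Nat.cast_pos.mpr hk
  have htk : 0 ≤ t / k := le_of_lt (div_pos ht0 hk0)
  rw [tsum_eq_sum (s := Finset.range ⌊t/(k:ℝ)⌋₊) ?_]
  · have : ∀ n ∈ Finset.range ⌊t/(k:ℝ)⌋₊,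
        (Ici ((k*(n+1) : ℕ) : ℝ)).indicator (fun x : ℝ => (x:ℂ)^(-1-s)) t = (t:ℂ)^(-1-s) := by
      intro n hn
      rw [Finset.mem_range] at hn
      apply Set.indicator_of_mem
      have h1 : (n:ℝ) + 1 ≤ t / k := by
        have := Nat.floor_le htk
        have h2 : (n:ℝ) + 1 ≤ (⌊t/(k:ℝ)⌋₊ : ℝ) := by exact_mod_cast Nat.succ_le_of_lt hn
        linarith
      rw [Set.mem_Ici]
      rw [le_div_iff₀ hk0] at h1
      push_cast
      calc (k:ℝ) * ((n:ℝ)+1) = ((n:ℝ)+1) * k := mul_comm _ _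
        _ ≤ t := h1
    rw [Finset.sum_congr rfl this, Finset.sum_const, Finset.card_range]
    rw [← Int.natCast_floor_eq_floor htk]
    push_cast
    rw [nsmul_eq_mul]
  · intro n hn
    rw [Finset.mem_range, not_lt] at hn
    apply Set.indicator_of_notMem
    have h1 : t / k < (n:ℝ) + 1 := by
      have := Nat.lt_floor_add_one (t/(k:ℝ))
      have h2 : (⌊t/(k:ℝ)⌋₊ : ℝ) ≤ (n:ℝ) := by exact_mod_cast hn
      linarith
    have h3 := (div_lt_iff₀ hk0).mp h1
    refine fun hmem => absurd (Set.mem_Ici.mp hmem) (not_le.mpr ?_)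
    push_cast
    calc t < ((n:ℝ)+1) * k := h3
      _ = (k:ℝ) * ((n:ℝ)+1) := mul_comm _ _

lemma floor_integral (s : ℂ) (hs : 1 < s.re) (k : ℕ) (hk : 0 < k) :
    ∫ t in Ioi (1:ℝ), ((⌊t/(k:ℝ)⌋ : ℝ) : ℂ) * (t:ℂ)^(-1-s)
      = (k:ℂ)^(-s) * riemannZeta s / s := by
  have hs0 : 0 < s.re := by linarith
  have hss : s ≠ 0 := by rintro rfl; rw [Complex.zero_re] at hs0; linarith
  set F : ℕ → ℝ → ℂ := fun n => (Ici ((k*(n+1) : ℕ) : ℝ)).indicator (fun x : ℝ => (x:ℂ)^(-1-s))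
  have hm1 : ∀ n : ℕ, (1:ℝ) ≤ ((k*(n+1) : ℕ) : ℝ) := by
    intro n
    exact_mod_cast Nat.one_le_iff_ne_zero.mpr (by positivity)
  have hm0 : ∀ n : ℕ, (0:ℝ) < ((k*(n+1) : ℕ) : ℝ) := fun n => lt_of_lt_of_le one_pos (hm1 n)
  have hre : (-1-s).re < -1 := by simp; linarith
  have hFint : ∀ n, Integrable (F n) (volume.restrict (Ioi (1:ℝ))) := fun n =>
    (cpow_int s hs).indicator measurableSet_Ici
  have hnormval : ∀ n : ℕ, ∫ t in Ioi (1:ℝ), ‖F n t‖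
      = ((k*(n+1) : ℕ) : ℝ) ^ (-s.re) / s.re := by
    intro n
    have : (fun t => ‖F n t‖)
        = (Ici ((k*(n+1) : ℕ) : ℝ)).indicator (fun x : ℝ => ‖(x:ℂ)^(-1-s)‖) := by
      funext t; exact norm_indicator_eq_indicator_norm _ t
    rw [this, indicator_integral _ _ (hm1 n)]
    rw [setIntegral_congr_fun measurableSet_Ioi
      (g := fun x : ℝ => x ^ ((-1:ℝ)-s.re)) ?_]
    · rw [integral_Ioi_rpow_of_lt (by linarith) (hm0 n)]
      rw [show (-1:ℝ)-s.re+1 = -s.re by ring]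
      rw [neg_div, div_neg, neg_neg]
    · intro x hx
      have hx0 : 0 < x := lt_of_le_of_lt (le_of_lt (hm0 n)) hx
      show ‖(x:ℂ)^(-1-s)‖ = x ^ ((-1:ℝ)-s.re)
      rw [Complex.norm_cpow_eq_rpow_re_of_pos hx0]
      simp [Complex.sub_re, Complex.neg_re, Complex.one_re]
  have hsummable : Summable fun n : ℕ => ∫ t in Ioi (1:ℝ), ‖F n t‖ := by
    simp_rw [hnormval]
    apply Summable.div_const
    have hbase : Summable fun n : ℕ => ((n+1 : ℕ) : ℝ) ^ (-s.re) := by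
      have := (Real.summable_nat_rpow (p := -s.re)).mpr (by linarith)
      exact_mod_cast (summable_nat_add_iff 1).mpr this
    refine Summable.of_nonneg_of_le (fun n => ?_) (fun n => ?_) hbase
    · positivity
    · apply Real.rpow_le_rpow_of_nonpos (by exact_mod_cast Nat.succ_pos n) ?_ (by linarith)
      exact_mod_cast Nat.le_mul_of_pos_left _ hk
  have hswap := integral_tsum_of_summable_integral_norm hFint hsummable
  have hcongr : ∫ t in Ioi (1:ℝ), ((⌊t/(k:ℝ)⌋ : ℝ) : ℂ) * (t:ℂ)^(-1-s)
      = ∫ t in Ioi (1:ℝ), ∑' n : ℕ, F n t := by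
    refine setIntegral_congr_fun measurableSet_Ioi (fun t ht => ?_)
    exact (floor_tsum s k hk t ht).symm
  rw [hcongr, ← hswap]
  have hval : ∀ n : ℕ, ∫ t in Ioi (1:ℝ), F n t
      = (k:ℂ)^(-s) / s * ((n+1 : ℕ) : ℂ) ^ (-s) := by
    intro n
    rw [show F n = (Ici ((k*(n+1) : ℕ) : ℝ)).indicator (fun x : ℝ => (x:ℂ)^(-1-s)) from rfl,
      indicator_integral _ _ (hm1 n), integral_Ioi_cpow_of_lt hre (hm0 n)]
    rw [show -1-s+1 = -s by ring, neg_div, div_neg, neg_neg]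
    have hk0 : (0:ℝ) ≤ (k:ℝ) := Nat.cast_nonneg k
    have hn0 : (0:ℝ) ≤ ((n+1:ℕ):ℝ) := Nat.cast_nonneg _
    have : (((k*(n+1):ℕ):ℝ) : ℂ) ^ (-s)
        = ((k:ℝ) : ℂ)^(-s) * (((n+1:ℕ):ℝ) : ℂ)^(-s) := by
      rw [Nat.cast_mul, Complex.ofReal_mul, Complex.mul_cpow_ofReal_nonneg hk0 hn0]
    rw [this]
    push_cast
    ring
  simp_rw [hval]
  rw [tsum_mul_left]
  have hzeta : ∑' n : ℕ, ((n+1 : ℕ) : ℂ) ^ (-s) = riemannZeta s := by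
    rw [zeta_eq_tsum_one_div_nat_add_one_cpow hs]
    congr 1; funext n
    push_cast
    rw [Complex.cpow_neg, one_div]
  rw [hzeta]; ring

lemma floor_integrable (s : ℂ) (hs : 1 < s.re) (k : ℕ) (hk : 0 < k) :
    IntegrableOn (fun t : ℝ => ((⌊t/(k:ℝ)⌋ : ℝ) : ℂ) * (t:ℂ)^(-1-s)) (Ioi (1:ℝ)) := by
  have hb : IntegrableOn (fun t : ℝ => t ^ (-s.re)) (Ioi (1:ℝ)) :=
    integrableOn_Ioi_rpow_of_lt (by linarith) one_pos
  refine hb.mono' ?_ ?_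
  · apply AEStronglyMeasurable.mul ?_ (cpow_asm s)
    have hfl : Measurable fun t : ℝ => (⌊t/(k:ℝ)⌋ : ℤ) :=
      Int.measurable_floor.comp (measurable_id.div_const _)
    have hcast : Measurable (Int.cast : ℤ → ℝ) := measurable_from_top
    exact (Complex.measurable_ofReal.comp (hcast.comp hfl)).aestronglyMeasurable
  · rw [ae_restrict_iff' measurableSet_Ioi]
    filter_upwards with t ht
    have ht0 : (0:ℝ) < t := lt_trans one_pos ht
    have hk0 : (0:ℝ) < k := Nat.cast_pos.mpr hk
    rw [norm_mul, Complex.norm_real, Real.norm_eq_abs,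
      Complex.norm_cpow_eq_rpow_re_of_pos ht0]
    have h1 : |(⌊t/(k:ℝ)⌋ : ℝ)| ≤ t := by
      rw [abs_of_nonneg]
      · calc (⌊t/(k:ℝ)⌋ : ℝ) ≤ t / k := Int.floor_le _
          _ ≤ t / 1 := by apply div_le_div_of_nonneg_left (le_of_lt ht0) one_pos; exact_mod_cast hk
          _ = t := div_one t
      · exact_mod_cast Int.floor_nonneg.mpr (le_of_lt (div_pos ht0 hk0))
    calc |(⌊t/(k:ℝ)⌋ : ℝ)| * t ^ ((-1-s).re) ≤ t * t ^ ((-1-s).re) := by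
          apply mul_le_mul_of_nonneg_right h1 (Real.rpow_nonneg (le_of_lt ht0) _)
      _ = t ^ (-s.re) := by
          rw [show ((-1-s).re) = -1 - s.re by simp]
          rw [show t * t ^ (-1-s.re) = t^(1:ℝ) * t^(-1-s.re) by rw [Real.rpow_one],
            ← Real.rpow_add ht0]
          congr 1
          ring

theorem stmt7 (s : ℂ) (hs : 1 < s.re) (hs1 : s ≠ 1) :
    (∫ t in Set.Ioi (1:ℝ), ((1 - A t : ℝ) : ℂ) * (t : ℂ) ^ (-1 - s))
      = 1 / s - (riemannZeta s / s) *
          (1 - (2:ℂ) ^ (-s) - (3:ℂ) ^ (-s) - (5:ℂ) ^ (-s) + (30:ℂ) ^ (-s)) := by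
  have hs0 : s ≠ 0 := by rintro rfl; rw [Complex.zero_re] at hs; linarith
  have h1 := floor_integrable s hs 1 one_pos
  have h2 := floor_integrable s hs 2 (by norm_num)
  have h3 := floor_integrable s hs 3 (by norm_num)
  have h5 := floor_integrable s hs 5 (by norm_num)
  have h30 := floor_integrable s hs 30 (by norm_num)
  have h0 := cpow_int s hs
  have hptw : ∀ t ∈ Ioi (1:ℝ), ((1 - A t : ℝ) : ℂ) * (t : ℂ) ^ (-1 - s)
      = ((t:ℂ)^(-1-s) - ((⌊t/((1:ℕ):ℝ)⌋ : ℝ) : ℂ) * (t:ℂ)^(-1-s)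
        + ((⌊t/((2:ℕ):ℝ)⌋ : ℝ) : ℂ) * (t:ℂ)^(-1-s)
        + ((⌊t/((3:ℕ):ℝ)⌋ : ℝ) : ℂ) * (t:ℂ)^(-1-s)
        + ((⌊t/((5:ℕ):ℝ)⌋ : ℝ) : ℂ) * (t:ℂ)^(-1-s))
        - ((⌊t/((30:ℕ):ℝ)⌋ : ℝ) : ℂ) * (t:ℂ)^(-1-s) := by
    intro t _
    simp only [A, Nat.cast_ofNat, Nat.cast_one, div_one]
    push_cast
    ring
  rw [setIntegral_congr_fun measurableSet_Ioi hptw]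
  rw [integral_sub (by exact ((((h0.sub h1).add h2).add h3).add h5)) h30,
    integral_add (by exact (((h0.sub h1).add h2).add h3)) h5,
    integral_add (by exact ((h0.sub h1).add h2)) h3,
    integral_add (by exact (h0.sub h1)) h2,
    integral_sub h0 h1]
  have hc : ∫ t in Ioi (1:ℝ), (t:ℂ)^(-1-s) = 1/s := by
    rw [integral_Ioi_cpow_of_lt (by simp; linarith) one_pos]
    rw [show -1-s+1 = -s by ring]
    push_cast
    rw [Complex.one_cpow, neg_div, div_neg, neg_neg]
  rw [hc, floor_integral s hs 1 one_pos, floor_integral s hs 2 (by norm_num),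
    floor_integral s hs 3 (by norm_num), floor_integral s hs 5 (by norm_num),
    floor_integral s hs 30 (by norm_num)]
  push_cast
  rw [Complex.one_cpow]
  ring
end

section
/- Assume that |ψ(X) - X| ≤ 0.94·√X for all 11 ≤ X ≤ 10^19. Then for all real X with 11 ≤ X ≤ 10^19, one has -5.44 - 0.47·log X ≤ Σ_{k ≤ X} Λ(k)/√k - 2√X ≤ 0.47·log X - 1.19. -/
open Finset Real ArithmeticFunction

noncomputable def Ps (n : ℕ) : ℝ := ∑ k ∈ Finset.Icc 1 n, Λ k
noncomputable def gg (k : ℕ) : ℝ := (Real.sqrt k)⁻¹ - (Real.sqrt ((k : ℝ) + 1))⁻¹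

lemma gg_nonneg {k : ℕ} (hk : 1 ≤ k) : 0 ≤ gg k := by
  unfold gg
  rw [sub_nonneg]
  apply inv_anti₀
  · exact Real.sqrt_pos.2 (by exact_mod_cast hk)
  · exact Real.sqrt_le_sqrt (by push_cast; linarith)

lemma Ps_nonneg (n : ℕ) : 0 ≤ Ps n :=
  Finset.sum_nonneg fun k _ => vonMangoldt_nonneg

lemma Ps_mono {a b : ℕ} (h : a ≤ b) : Ps a ≤ Ps b :=
  Finset.sum_le_sum_of_subset_of_nonneg (Finset.Icc_subset_Icc_right h)
    (fun k _ _ => vonMangoldt_nonneg)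

lemma abel : ∀ n : ℕ, 1 ≤ n →
    (∑ k ∈ Finset.Icc 1 n, Λ k / Real.sqrt k)
      = Ps n / Real.sqrt n + ∑ k ∈ Finset.Icc 1 (n - 1), Ps k * gg k := by
  intro n hn
  induction n, hn using Nat.le_induction with
  | base => simp [Ps]
  | succ n hn ih =>
    have h1 : (∑ k ∈ Finset.Icc 1 (n + 1), Λ k / Real.sqrt k)
        = (∑ k ∈ Finset.Icc 1 n, Λ k / Real.sqrt k) + Λ (n+1) / Real.sqrt ((n+1 : ℕ) : ℝ) :=
      Finset.sum_Icc_succ_top (by omega) _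
    have h2 : Ps (n + 1) = Ps n + Λ (n+1) := Finset.sum_Icc_succ_top (by omega) _
    have h4 : ∑ k ∈ Finset.Icc 1 (n + 1 - 1), Ps k * gg k
        = (∑ k ∈ Finset.Icc 1 (n - 1), Ps k * gg k) + Ps n * gg n := by
      have hn' : n - 1 + 1 = n := by omega
      rw [show n + 1 - 1 = n from rfl, ← hn', Finset.sum_Icc_succ_top (by omega)]
      rw [hn']
    rw [h1, h2, h4, ih]
    unfold gg
    push_cast
    ring

lemma sum_kg : ∀ n : ℕ, 11 ≤ n →
    (∑ k ∈ Finset.Icc 11 (n - 1), (k : ℝ) * gg k)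
      = Real.sqrt 11 - Real.sqrt n + ∑ k ∈ Finset.Icc 12 n, (Real.sqrt k)⁻¹ := by
  intro n hn
  induction n, hn using Nat.le_induction with
  | base => norm_num
  | succ n hn ih =>
    have h4 : ∑ k ∈ Finset.Icc 11 (n + 1 - 1), (k : ℝ) * gg k
        = (∑ k ∈ Finset.Icc 11 (n - 1), (k : ℝ) * gg k) + (n : ℝ) * gg n := by
      have hn' : n - 1 + 1 = n := by omega
      rw [show n + 1 - 1 = n from rfl, ← hn', Finset.sum_Icc_succ_top (by omega)]
      rw [hn']
    have h5 : ∑ k ∈ Finset.Icc 12 (n + 1), (Real.sqrt k)⁻¹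
        = (∑ k ∈ Finset.Icc 12 n, (Real.sqrt k)⁻¹) + (Real.sqrt ((n+1 : ℕ) : ℝ))⁻¹ :=
      Finset.sum_Icc_succ_top (by omega) _
    rw [h4, h5, ih]
    have hn0 : (0:ℝ) < n := by exact_mod_cast show 0 < n by omega
    have hs : (0:ℝ) < Real.sqrt n := Real.sqrt_pos.2 hn0
    have ht : (0:ℝ) < Real.sqrt ((n:ℝ) + 1) := Real.sqrt_pos.2 (by linarith)
    have hs2 : Real.sqrt n ^ 2 = (n:ℝ) := Real.sq_sqrt hn0.le
    have ht2 : Real.sqrt ((n:ℝ) + 1) ^ 2 = (n:ℝ) + 1 := Real.sq_sqrt (by linarith)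
    have hcast : Real.sqrt ((n+1 : ℕ) : ℝ) = Real.sqrt ((n:ℝ) + 1) := by push_cast; ring_nf
    have e1 : (n:ℝ) * (Real.sqrt n)⁻¹ = Real.sqrt n := by
      rw [← div_eq_mul_inv]; exact Real.div_sqrt
    have e2 : ((n:ℝ)+1) * (Real.sqrt ((n:ℝ)+1))⁻¹ = Real.sqrt ((n:ℝ)+1) := by
      rw [← div_eq_mul_inv]; exact Real.div_sqrt
    have key : (n : ℝ) * gg n = Real.sqrt n - Real.sqrt ((n:ℝ)+1) + (Real.sqrt ((n:ℝ)+1))⁻¹ := by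
      unfold gg
      linear_combination e1 - e2
    rw [hcast]
    push_cast
    linarith [key]

lemma sum_invsqrt_le : ∀ n : ℕ, 11 ≤ n →
    (∑ k ∈ Finset.Icc 12 n, (Real.sqrt k)⁻¹) ≤ 2 * Real.sqrt n - 2 * Real.sqrt 11 := by
  intro n hn
  induction n, hn using Nat.le_induction with
  | base => norm_num
  | succ n hn ih =>
    have h5 : ∑ k ∈ Finset.Icc 12 (n + 1), (Real.sqrt k)⁻¹
        = (∑ k ∈ Finset.Icc 12 n, (Real.sqrt k)⁻¹) + (Real.sqrt ((n+1 : ℕ) : ℝ))⁻¹ :=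
      Finset.sum_Icc_succ_top (by omega) _
    have hn0 : (0:ℝ) < n := by exact_mod_cast show 0 < n by omega
    have hs : (0:ℝ) < Real.sqrt n := Real.sqrt_pos.2 hn0
    have ht : (0:ℝ) < Real.sqrt ((n:ℝ) + 1) := Real.sqrt_pos.2 (by linarith)
    have hs2 : Real.sqrt n ^ 2 = (n:ℝ) := Real.sq_sqrt hn0.le
    have ht2 : Real.sqrt ((n:ℝ) + 1) ^ 2 = (n:ℝ) + 1 := Real.sq_sqrt (by linarith)
    have hcast : Real.sqrt ((n+1 : ℕ) : ℝ) = Real.sqrt ((n:ℝ) + 1) := by push_cast; ring_nf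
    have step : (Real.sqrt ((n:ℝ)+1))⁻¹ ≤ 2 * Real.sqrt ((n:ℝ)+1) - 2 * Real.sqrt n := by
      rw [inv_eq_one_div, div_le_iff₀ ht]
      nlinarith [sq_nonneg (Real.sqrt n - Real.sqrt ((n:ℝ)+1))]
    rw [h5, hcast]
    push_cast
    linarith [step, ih]

lemma sum_invsqrt_ge : ∀ n : ℕ, 11 ≤ n →
    2 * Real.sqrt ((n:ℝ) + 1) - 2 * Real.sqrt 12 ≤ ∑ k ∈ Finset.Icc 12 n, (Real.sqrt k)⁻¹ := by
  intro n hn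
  induction n, hn using Nat.le_induction with
  | base => norm_num
  | succ n hn ih =>
    have h5 : ∑ k ∈ Finset.Icc 12 (n + 1), (Real.sqrt k)⁻¹
        = (∑ k ∈ Finset.Icc 12 n, (Real.sqrt k)⁻¹) + (Real.sqrt ((n+1 : ℕ) : ℝ))⁻¹ :=
      Finset.sum_Icc_succ_top (by omega) _
    have hn0 : (0:ℝ) < n := by exact_mod_cast show 0 < n by omega
    have ht : (0:ℝ) < Real.sqrt ((n:ℝ) + 1) := Real.sqrt_pos.2 (by linarith)
    have hu : (0:ℝ) < Real.sqrt ((n:ℝ) + 2) := Real.sqrt_pos.2 (by linarith)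
    have ht2 : Real.sqrt ((n:ℝ) + 1) ^ 2 = (n:ℝ) + 1 := Real.sq_sqrt (by linarith)
    have hu2 : Real.sqrt ((n:ℝ) + 2) ^ 2 = (n:ℝ) + 2 := Real.sq_sqrt (by linarith)
    have hcast : Real.sqrt ((n+1 : ℕ) : ℝ) = Real.sqrt ((n:ℝ) + 1) := by push_cast; ring_nf
    have step : 2 * Real.sqrt ((n:ℝ)+2) - 2 * Real.sqrt ((n:ℝ)+1) ≤ (Real.sqrt ((n:ℝ)+1))⁻¹ := by
      rw [inv_eq_one_div, le_div_iff₀ ht]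
      nlinarith [sq_nonneg (Real.sqrt ((n:ℝ)+2) - Real.sqrt ((n:ℝ)+1))]
    rw [h5, hcast]
    push_cast
    have : ((n:ℝ) + 1) + 1 = (n:ℝ) + 2 := by ring
    rw [this]
    linarith [step, ih]

lemma term_wt {n : ℕ} (hn : 11 ≤ n) :
    Real.sqrt n * gg n ≤ (Real.log (2*(n:ℝ)+1) - Real.log (2*(n:ℝ)-1)) / 2 := by
  have hn0 : (0:ℝ) < n := by exact_mod_cast show 0 < n by omega
  have hn11 : (11:ℝ) ≤ n := by exact_mod_cast hn
  have hs : (0:ℝ) < Real.sqrt n := Real.sqrt_pos.2 hn0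
  have ht : (0:ℝ) < Real.sqrt ((n:ℝ) + 1) := Real.sqrt_pos.2 (by linarith)
  have hs2 : Real.sqrt n ^ 2 = (n:ℝ) := Real.sq_sqrt hn0.le
  have ht2 : Real.sqrt ((n:ℝ) + 1) ^ 2 = (n:ℝ) + 1 := Real.sq_sqrt (by linarith)
  have h1 : Real.sqrt n * gg n ≤ 1 / (2*(n:ℝ)+1) := by
    unfold gg
    have e1 : Real.sqrt n * (Real.sqrt n)⁻¹ = 1 := mul_inv_cancel₀ hs.ne'
    have h2 : 2*(n:ℝ) * Real.sqrt ((n:ℝ)+1) ≤ (2*(n:ℝ)+1) * Real.sqrt n := by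
      apply le_of_pow_le_pow_left₀ two_ne_zero (by positivity)
      have expand : (2*(n:ℝ) * Real.sqrt ((n:ℝ)+1))^2 = 4*(n:ℝ)^2 * ((n:ℝ)+1) := by
        rw [mul_pow]; rw [ht2]; ring
      have expand2 : ((2*(n:ℝ)+1) * Real.sqrt n)^2 = (2*(n:ℝ)+1)^2 * (n:ℝ) := by
        rw [mul_pow]; rw [hs2]
      rw [expand, expand2]
      nlinarith [hn11]
    have h3 : 2*(n:ℝ) / (2*(n:ℝ)+1) ≤ Real.sqrt n * (Real.sqrt ((n:ℝ)+1))⁻¹ := by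
      rw [div_le_iff₀ (by linarith : (0:ℝ) < 2*(n:ℝ)+1), ← div_eq_mul_inv,
        div_mul_eq_mul_div, le_div_iff₀ ht]
      nlinarith [h2]
    rw [mul_sub, e1]
    have e3 : (1:ℝ) - 2*(n:ℝ) / (2*(n:ℝ)+1) = 1/(2*(n:ℝ)+1) := by
      field_simp; ring
    linarith [h3, e3.le, e3.ge]
  have h4 : 1 / (2*(n:ℝ)+1) ≤ (Real.log (2*(n:ℝ)+1) - Real.log (2*(n:ℝ)-1)) / 2 := by
    have hpos : (0:ℝ) < 2*(n:ℝ)-1 := by linarith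
    have hpos2 : (0:ℝ) < 2*(n:ℝ)+1 := by linarith
    have hlog := Real.log_le_sub_one_of_pos (show (0:ℝ) < (2*(n:ℝ)-1)/(2*(n:ℝ)+1) by positivity)
    rw [Real.log_div hpos.ne' hpos2.ne'] at hlog
    have : (2*(n:ℝ)-1)/(2*(n:ℝ)+1) - 1 = -2/(2*(n:ℝ)+1) := by field_simp; ring
    rw [this] at hlog
    have h6 : 2/(2*(n:ℝ)+1) ≤ Real.log (2*(n:ℝ)+1) - Real.log (2*(n:ℝ)-1) := by
      have e : (-2:ℝ)/(2*(n:ℝ)+1) = -(2/(2*(n:ℝ)+1)) := by ring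
      rw [e] at hlog; linarith
    have e2 : 1/(2*(n:ℝ)+1) = (2/(2*(n:ℝ)+1))/2 := by ring
    linarith
  linarith [h1, h4]

lemma err_wt : ∀ n : ℕ, 11 ≤ n →
    (∑ k ∈ Finset.Icc 11 (n-1), Real.sqrt k * gg k)
      ≤ (Real.log (2*(n:ℝ)-1) - Real.log 21) / 2 := by
  intro n hn
  induction n, hn using Nat.le_induction with
  | base => norm_num
  | succ n hn ih =>
    have h4 : ∑ k ∈ Finset.Icc 11 (n + 1 - 1), Real.sqrt k * gg k
        = (∑ k ∈ Finset.Icc 11 (n - 1), Real.sqrt k * gg k) + Real.sqrt n * gg n := by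
      have hn' : n - 1 + 1 = n := by omega
      rw [show n + 1 - 1 = n from rfl, ← hn', Finset.sum_Icc_succ_top (by omega)]
      rw [hn']
    rw [h4]
    have := term_wt hn
    push_cast
    have e : 2*((n:ℝ)+1)-1 = 2*(n:ℝ)+1 := by ring
    rw [e]
    linarith [ih, this]

lemma lam4 : Λ 4 = Real.log 2 := by
  rw [show (4:ℕ) = 2^2 from rfl, vonMangoldt_apply_pow (by norm_num),
    vonMangoldt_apply_prime Nat.prime_two]; norm_num

lemma lam8 : Λ 8 = Real.log 2 := by
  rw [show (8:ℕ) = 2^3 from rfl, vonMangoldt_apply_pow (by norm_num),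
    vonMangoldt_apply_prime Nat.prime_two]; norm_num

lemma lam9 : Λ 9 = Real.log 3 := by
  rw [show (9:ℕ) = 3^2 from rfl, vonMangoldt_apply_pow (by norm_num),
    vonMangoldt_apply_prime Nat.prime_three]; norm_num

lemma lam6 : Λ 6 = 0 := by rw [vonMangoldt_apply]; norm_num; decide

lemma lam10 : Λ 10 = 0 := by rw [vonMangoldt_apply]; norm_num; decide

lemma Ps5 : Ps 5 = Real.log 2 + Real.log 3 + Real.log 2 + Real.log 5 := by
  unfold Ps
  rw [show Finset.Icc 1 5 = ({1,2,3,4,5} : Finset ℕ) by decide]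
  rw [Finset.sum_insert (by decide), Finset.sum_insert (by decide),
    Finset.sum_insert (by decide), Finset.sum_insert (by decide), Finset.sum_singleton]
  rw [vonMangoldt_apply_one, lam4, vonMangoldt_apply_prime Nat.prime_two,
    vonMangoldt_apply_prime Nat.prime_three, vonMangoldt_apply_prime (by norm_num : Nat.Prime 5)]
  push_cast; ring

lemma Ps10 : Ps 10 = Real.log 2 + Real.log 3 + Real.log 2 + Real.log 5
    + Real.log 7 + Real.log 2 + Real.log 3 := by
  unfold Ps
  rw [show Finset.Icc 1 10 = ({1,2,3,4,5,6,7,8,9,10} : Finset ℕ) by decide]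
  rw [Finset.sum_insert (by decide), Finset.sum_insert (by decide),
    Finset.sum_insert (by decide), Finset.sum_insert (by decide),
    Finset.sum_insert (by decide), Finset.sum_insert (by decide),
    Finset.sum_insert (by decide), Finset.sum_insert (by decide),
    Finset.sum_insert (by decide), Finset.sum_singleton]
  rw [vonMangoldt_apply_one, lam4, lam6, lam8, lam9, lam10,
    vonMangoldt_apply_prime Nat.prime_two, vonMangoldt_apply_prime Nat.prime_three,
    vonMangoldt_apply_prime (by norm_num : Nat.Prime 5),
    vonMangoldt_apply_prime (by norm_num : Nat.Prime 7)]
  push_cast; ring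

lemma Ps5_le : Ps 5 ≤ 6 * Real.log 2 := by
  rw [Ps5]
  have e : Real.log 2 + Real.log 3 + Real.log 2 + Real.log 5 = Real.log 60 := by
    rw [← Real.log_mul (by norm_num) (by norm_num), ← Real.log_mul (by norm_num) (by norm_num),
      ← Real.log_mul (by norm_num) (by norm_num)]
    norm_num
  rw [e, show (6:ℝ) * Real.log 2 = Real.log (2^(6:ℕ)) by rw [Real.log_pow]; norm_num]
  exact Real.log_le_log (by norm_num) (by norm_num)

lemma Ps10_le : Ps 10 ≤ 12 * Real.log 2 := by
  rw [Ps10]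
  have e : Real.log 2 + Real.log 3 + Real.log 2 + Real.log 5 + Real.log 7
      + Real.log 2 + Real.log 3 = Real.log 2520 := by
    rw [← Real.log_mul (by norm_num) (by norm_num), ← Real.log_mul (by norm_num) (by norm_num),
      ← Real.log_mul (by norm_num) (by norm_num), ← Real.log_mul (by norm_num) (by norm_num),
      ← Real.log_mul (by norm_num) (by norm_num), ← Real.log_mul (by norm_num) (by norm_num)]
    norm_num
  rw [e, show (12:ℝ) * Real.log 2 = Real.log (2^(12:ℕ)) by rw [Real.log_pow]; norm_num]
  exact Real.log_le_log (by norm_num) (by norm_num)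

lemma inv_sqrt2_le : (Real.sqrt 2)⁻¹ ≤ 0.70711 := by
  have h : (1.41421:ℝ) ≤ Real.sqrt 2 := (Real.le_sqrt (by norm_num) (by norm_num)).mpr (by norm_num)
  calc (Real.sqrt 2)⁻¹ ≤ (1.41421:ℝ)⁻¹ := inv_anti₀ (by norm_num) h
    _ ≤ 0.70711 := by norm_num

lemma inv_sqrt6_le : (Real.sqrt 6)⁻¹ ≤ 0.40825 := by
  have h : (2.449489:ℝ) ≤ Real.sqrt 6 := (Real.le_sqrt (by norm_num) (by norm_num)).mpr (by norm_num)
  calc (Real.sqrt 6)⁻¹ ≤ (2.449489:ℝ)⁻¹ := inv_anti₀ (by norm_num) h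
    _ ≤ 0.40825 := by norm_num

lemma inv_sqrt11_ge : (0.30151:ℝ) ≤ (Real.sqrt 11)⁻¹ := by
  have h : Real.sqrt 11 ≤ 3.31663 := (Real.sqrt_le_left (by norm_num)).mpr (by norm_num)
  have hpos : (0:ℝ) < Real.sqrt 11 := Real.sqrt_pos.2 (by norm_num)
  calc (0.30151:ℝ) ≤ (3.31663:ℝ)⁻¹ := by norm_num
    _ ≤ (Real.sqrt 11)⁻¹ := inv_anti₀ hpos h

lemma sqrt11_lb : (3.3166:ℝ) ≤ Real.sqrt 11 :=
  (Real.le_sqrt (by norm_num) (by norm_num)).mpr (by norm_num)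

lemma sqrt12_ub : Real.sqrt 12 ≤ 3.4642 :=
  (Real.sqrt_le_left (by norm_num)).mpr (by norm_num)

lemma log21_lb : (2.9805:ℝ) ≤ Real.log 21 := by
  have h : Real.log (2^(43:ℕ)) ≤ Real.log (21^(10:ℕ)) := Real.log_le_log (by positivity) (by norm_num)
  rw [Real.log_pow, Real.log_pow] at h
  push_cast at h
  nlinarith [Real.log_two_gt_d9]

lemma gg_sum_25 : (∑ k ∈ Finset.Ioc 1 5, gg k) = (Real.sqrt 2)⁻¹ - (Real.sqrt 6)⁻¹ := by
  rw [show Finset.Ioc 1 5 = ({2,3,4,5} : Finset ℕ) by decide]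
  rw [Finset.sum_insert (by decide), Finset.sum_insert (by decide),
    Finset.sum_insert (by decide), Finset.sum_singleton]
  unfold gg
  norm_num

lemma gg_sum_610 : (∑ k ∈ Finset.Ioc 5 10, gg k) = (Real.sqrt 6)⁻¹ - (Real.sqrt 11)⁻¹ := by
  rw [show Finset.Ioc 5 10 = ({6,7,8,9,10} : Finset ℕ) by decide]
  rw [Finset.sum_insert (by decide), Finset.sum_insert (by decide),
    Finset.sum_insert (by decide), Finset.sum_insert (by decide), Finset.sum_singleton]
  unfold gg
  norm_num

lemma Tp_le : (∑ k ∈ Finset.Icc 1 10, Ps k * gg k) ≤ 2.131 := by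
  have hsplit : (∑ k ∈ Finset.Icc 1 10, Ps k * gg k)
      = (∑ k ∈ Finset.Ioc 0 1, Ps k * gg k) + (∑ k ∈ Finset.Ioc 1 5, Ps k * gg k)
        + (∑ k ∈ Finset.Ioc 5 10, Ps k * gg k) := by
    rw [show Finset.Icc 1 10 = Finset.Ioc 0 10 from Finset.Icc_add_one_left_eq_Ioc 0 10]
    rw [Finset.sum_Ioc_consecutive _ (by omega : (0:ℕ) ≤ 1) (by omega : (1:ℕ) ≤ 5)]
    rw [Finset.sum_Ioc_consecutive _ (by omega : (0:ℕ) ≤ 5) (by omega : (5:ℕ) ≤ 10)]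
  have h1 : (∑ k ∈ Finset.Ioc 0 1, Ps k * gg k) = 0 := by
    rw [show Finset.Ioc 0 1 = ({1} : Finset ℕ) by decide, Finset.sum_singleton]
    have : Ps 1 = 0 := by
      unfold Ps
      rw [show Finset.Icc 1 1 = ({1} : Finset ℕ) by decide, Finset.sum_singleton,
        vonMangoldt_apply_one]
    rw [this, zero_mul]
  have h2 : (∑ k ∈ Finset.Ioc 1 5, Ps k * gg k)
      ≤ 6 * Real.log 2 * ((Real.sqrt 2)⁻¹ - (Real.sqrt 6)⁻¹) := by
    rw [← gg_sum_25, Finset.mul_sum]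
    apply Finset.sum_le_sum
    intro k hk
    simp only [Finset.mem_Ioc] at hk
    exact mul_le_mul_of_nonneg_right ((Ps_mono hk.2).trans Ps5_le) (gg_nonneg (by omega))
  have h3 : (∑ k ∈ Finset.Ioc 5 10, Ps k * gg k)
      ≤ 12 * Real.log 2 * ((Real.sqrt 6)⁻¹ - (Real.sqrt 11)⁻¹) := by
    rw [← gg_sum_610, Finset.mul_sum]
    apply Finset.sum_le_sum
    intro k hk
    simp only [Finset.mem_Ioc] at hk
    exact mul_le_mul_of_nonneg_right ((Ps_mono hk.2).trans Ps10_le) (gg_nonneg (by omega))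
  have i2 := inv_sqrt2_le
  have i6 := inv_sqrt6_le
  have i11 := inv_sqrt11_ge
  have i6' : (0:ℝ) ≤ (Real.sqrt 6)⁻¹ := by positivity
  have i2' : (0:ℝ) ≤ (Real.sqrt 2)⁻¹ := by positivity
  have l1 := Real.log_two_gt_d9
  have l2 := Real.log_two_lt_d9
  nlinarith [hsplit, h1, h2, h3, i2, i6, i11, i6', i2', l1, l2,
    mul_nonneg (by positivity : (0:ℝ) ≤ Real.log 2) i6']

theorem stmt11
    (hψ : ∀ X : ℝ, 11 ≤ X → X ≤ 10^19 → |ψ X - X| ≤ 0.94 * Real.sqrt X) :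
    ∀ X : ℝ, 11 ≤ X → X ≤ 10^19 →
      -5.44 - 0.47 * Real.log X
          ≤ (∑ k ∈ Finset.Icc 1 ⌊X⌋₊, Λ k / Real.sqrt k) - 2 * Real.sqrt X
      ∧ (∑ k ∈ Finset.Icc 1 ⌊X⌋₊, Λ k / Real.sqrt k) - 2 * Real.sqrt X
          ≤ 0.47 * Real.log X - 1.19 := by
  intro X hX11 hX19
  have hX0 : (0:ℝ) < X := by linarith
  set N := ⌊X⌋₊ with hNdef
  have hN11 : 11 ≤ N := Nat.le_floor (by exact_mod_cast hX11)
  have hNX : (N:ℝ) ≤ X := Nat.floor_le hX0.le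
  have hXN : X < (N:ℝ) + 1 := Nat.lt_floor_add_one X
  have hN19 : (N:ℝ) ≤ 10^19 := le_trans hNX hX19
  have hNR : (11:ℝ) ≤ (N:ℝ) := by exact_mod_cast hN11
  -- ψ at naturals
  have hP : ∀ k : ℕ, 11 ≤ k → (k:ℝ) ≤ 10^19 → |Ps k - (k:ℝ)| ≤ 0.94 * Real.sqrt k := by
    intro k hk hk19
    have h := hψ k (by exact_mod_cast hk) hk19
    unfold ψ at h
    rwa [Nat.floor_natCast] at h
  -- decomposition
  have habel := abel N (by omega)
  have hsplit : (∑ k ∈ Finset.Icc 1 (N - 1), Ps k * gg k)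
      = (∑ k ∈ Finset.Icc 1 10, Ps k * gg k) + ∑ k ∈ Finset.Icc 11 (N - 1), Ps k * gg k := by
    rw [show Finset.Icc 1 (N-1) = Finset.Ioc 0 (N-1) from Finset.Icc_add_one_left_eq_Ioc 0 (N-1),
      show Finset.Icc 1 10 = Finset.Ioc 0 10 from Finset.Icc_add_one_left_eq_Ioc 0 10,
      show Finset.Icc 11 (N-1) = Finset.Ioc 10 (N-1) from Finset.Icc_add_one_left_eq_Ioc 10 (N-1)]
    exact (Finset.sum_Ioc_consecutive _ (by omega) (by omega)).symm
  have hmid : (∑ k ∈ Finset.Icc 11 (N - 1), Ps k * gg k)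
      = (∑ k ∈ Finset.Icc 11 (N - 1), (k:ℝ) * gg k)
        + ∑ k ∈ Finset.Icc 11 (N - 1), (Ps k - (k:ℝ)) * gg k := by
    rw [← Finset.sum_add_distrib]
    exact Finset.sum_congr rfl fun k _ => by ring
  have hkg := sum_kg N hN11
  -- error bounds
  have hwt := err_wt N hN11
  have hwt0 : (0:ℝ) ≤ ∑ k ∈ Finset.Icc 11 (N-1), Real.sqrt k * gg k :=
    Finset.sum_nonneg fun k hk => by
      have hk' : 11 ≤ k := (Finset.mem_Icc.mp hk).1
      exact mul_nonneg (Real.sqrt_nonneg _) (gg_nonneg (by omega))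
  have hterm : ∀ k ∈ Finset.Icc 11 (N-1), |Ps k - (k:ℝ)| ≤ 0.94 * Real.sqrt k := by
    intro k hk
    rw [Finset.mem_Icc] at hk
    refine hP k hk.1 ?_
    have : (k:ℝ) ≤ (N:ℝ) := by exact_mod_cast le_trans hk.2 (by omega)
    linarith
  have hEub : (∑ k ∈ Finset.Icc 11 (N - 1), (Ps k - (k:ℝ)) * gg k)
      ≤ 0.94 * ((Real.log (2*(N:ℝ)-1) - Real.log 21) / 2) := by
    calc (∑ k ∈ Finset.Icc 11 (N - 1), (Ps k - (k:ℝ)) * gg k)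
        ≤ ∑ k ∈ Finset.Icc 11 (N - 1), 0.94 * (Real.sqrt k * gg k) := by
          apply Finset.sum_le_sum
          intro k hk
          have hg : 0 ≤ gg k := gg_nonneg (by have := (Finset.mem_Icc.mp hk).1; omega)
          have := abs_le.mp (hterm k hk)
          nlinarith [this.2, hg]
      _ = 0.94 * ∑ k ∈ Finset.Icc 11 (N - 1), Real.sqrt k * gg k := by
          rw [Finset.mul_sum]
      _ ≤ 0.94 * ((Real.log (2*(N:ℝ)-1) - Real.log 21) / 2) := by linarith
  have hElb : -(0.94 * ((Real.log (2*(N:ℝ)-1) - Real.log 21) / 2))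
      ≤ ∑ k ∈ Finset.Icc 11 (N - 1), (Ps k - (k:ℝ)) * gg k := by
    calc -(0.94 * ((Real.log (2*(N:ℝ)-1) - Real.log 21) / 2))
        ≤ -(0.94 * ∑ k ∈ Finset.Icc 11 (N - 1), Real.sqrt k * gg k) := by linarith
      _ = ∑ k ∈ Finset.Icc 11 (N - 1), -(0.94 * (Real.sqrt k * gg k)) := by
          rw [Finset.mul_sum, ← Finset.sum_neg_distrib]
      _ ≤ ∑ k ∈ Finset.Icc 11 (N - 1), (Ps k - (k:ℝ)) * gg k := by
          apply Finset.sum_le_sum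
          intro k hk
          have hg : 0 ≤ gg k := gg_nonneg (by have := (Finset.mem_Icc.mp hk).1; omega)
          have := abs_le.mp (hterm k hk)
          nlinarith [this.1, hg]
  have hQub := sum_invsqrt_le N hN11
  have hQlb := sum_invsqrt_ge N hN11
  have hT'ub := Tp_le
  have hT'lb : (0:ℝ) ≤ ∑ k ∈ Finset.Icc 1 10, Ps k * gg k :=
    Finset.sum_nonneg fun k hk => mul_nonneg (Ps_nonneg k)
      (gg_nonneg (Finset.mem_Icc.mp hk).1)
  -- Ps N bound
  have hsN : (0:ℝ) < Real.sqrt N := Real.sqrt_pos.2 (by linarith)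
  have hPN := abs_le.mp (hP N hN11 hN19)
  have hdiv : Ps N / Real.sqrt N = (Ps N - (N:ℝ)) / Real.sqrt N + Real.sqrt N := by
    rw [sub_div, Real.div_sqrt]; ring
  have hPNub : (Ps N - (N:ℝ)) / Real.sqrt N ≤ 0.94 := by
    rw [div_le_iff₀ hsN]; linarith [hPN.2]
  have hPNlb : (-0.94 : ℝ) ≤ (Ps N - (N:ℝ)) / Real.sqrt N := by
    rw [le_div_iff₀ hsN]; linarith [hPN.1]
  -- sqrt comparisons
  have hsq1 : Real.sqrt N ≤ Real.sqrt X := Real.sqrt_le_sqrt hNX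
  have hsq2 : Real.sqrt X ≤ Real.sqrt ((N:ℝ) + 1) := Real.sqrt_le_sqrt hXN.le
  have hsq11 : Real.sqrt 11 ≤ Real.sqrt N := Real.sqrt_le_sqrt hNR
  -- log comparison
  have hlog : Real.log (2*(N:ℝ)-1) ≤ Real.log 2 + Real.log X := by
    have h := Real.log_le_log (by linarith : (0:ℝ) < 2*(N:ℝ)-1) (by linarith : 2*(N:ℝ)-1 ≤ 2*X)
    rwa [Real.log_mul (by norm_num) hX0.ne'] at h
  have hlogpos : (0:ℝ) ≤ Real.log (2*(N:ℝ)-1) - Real.log 21 := by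
    have := Real.log_le_log (by norm_num : (0:ℝ) < 21) (by linarith : (21:ℝ) ≤ 2*(N:ℝ)-1)
    linarith
  have l2ub := Real.log_two_lt_d9
  have l2lb := Real.log_two_gt_d9
  have l21 := log21_lb
  have s11 := sqrt11_lb
  have s12 := sqrt12_ub
  have hlogX0 : (0:ℝ) ≤ Real.log X := Real.log_nonneg (by linarith)
  -- assemble
  rw [hmid, hkg] at hsplit
  rw [hsplit, hdiv] at habel
  constructor
  · rw [habel]
    linarith [hQlb, hElb, hPNlb, hT'lb, hlog, hlogpos, s11, s12, hsq2, hsq11, l21, l2ub, hlogX0]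
  · rw [habel]
    linarith [hQub, hEub, hPNub, hT'ub, hlog, hlogpos, s11, hsq1, l21, l2ub, hlogX0]
end
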